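/- Let K, I ∈ ℝ^{q×q} with K symmetric positive definite, and let 0 < τ < 1. Then the scalar-parametrized trace expression tr((1/(τ(τ−1))) K^τ + (1/(1−τ)) K + (1/τ) I_q) is nonnegative, with equality if and only if K = I_q. -/

import Mathlib

open Matrix

noncomputable def matFun {n : ℕ} (A : Matrix (Fin n) (Fin n) ℝ) (f : ℝ → ℝ) :
    Matrix (Fin n) (Fin n) ℝ :=
  if h : A.IsHermitian then
    (h.eigenvectorUnitary : Matrix (Fin n) (Fin n) ℝ) *
      Matrix.diagonal (fun i => f (h.eigenvalues i)) *
      star (h.eigenvectorUnitary : Matrix (Fin n) (Fin n) ℝ)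
  else 0

noncomputable def specNorm {n : ℕ} (A : Matrix (Fin n) (Fin n) ℝ) : ℝ :=
  if h : A.IsHermitian then ⨆ i, h.eigenvalues i else 0

lemma scalar_nonneg {τ : ℝ} (hτ0 : 0 < τ) (hτ1 : τ < 1) {x : ℝ} (hx : 0 < x) :
    0 ≤ (1 / (τ * (τ - 1))) * x ^ τ + (1 / (1 - τ)) * x + 1 / τ := by
  have hb : x ^ τ ≤ 1 + τ * (x - 1) := by
    have := rpow_one_add_le_one_add_mul_self (s := x - 1) (by linarith) hτ0.le hτ1.le
    simpa using this
  have hτ1' : (0:ℝ) < 1 - τ := by linarith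
  rw [← sub_nonneg] at hb
  have key : (1 / (τ * (τ - 1))) * x ^ τ + (1 / (1 - τ)) * x + 1 / τ
      = (1 + τ * (x - 1) - x ^ τ) / (τ * (1 - τ)) := by
    have h2 : τ ≠ 0 := hτ0.ne'
    have h3 : τ - 1 ≠ 0 := by linarith
    have h4 : (1:ℝ) - τ ≠ 0 := by linarith
    field_simp
    ring
  rw [key]
  exact div_nonneg hb (by positivity)

lemma scalar_pos {τ : ℝ} (hτ0 : 0 < τ) (hτ1 : τ < 1) {x : ℝ} (hx : 0 < x) (hx1 : x ≠ 1) :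
    0 < (1 / (τ * (τ - 1))) * x ^ τ + (1 / (1 - τ)) * x + 1 / τ := by
  have hb : x ^ τ < 1 + τ * (x - 1) := by
    have := rpow_one_add_lt_one_add_mul_self (s := x - 1) (by linarith) (by
      intro h; apply hx1; linarith) hτ0 hτ1
    simpa using this
  have hτ1' : (0:ℝ) < 1 - τ := by linarith
  have key : (1 / (τ * (τ - 1))) * x ^ τ + (1 / (1 - τ)) * x + 1 / τ
      = (1 + τ * (x - 1) - x ^ τ) / (τ * (1 - τ)) := by
    have h2 : τ ≠ 0 := hτ0.ne'
    have h3 : τ - 1 ≠ 0 := by linarith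
    have h4 : (1:ℝ) - τ ≠ 0 := by linarith
    field_simp
    ring
  rw [key]
  exact div_pos (by linarith) (by positivity)

/-- The covariance part of the τ divergence (0 < τ < 1):
`tr((1/(τ(τ−1))) K^τ + (1/(1−τ)) K + (1/τ) I)` is nonnegative and vanishes
iff `K = I`.  The matrix power `K^τ` is defined spectrally via `matFun`. -/
theorem tau_divergence_cov_nonneg_eq_zero_iff {q : ℕ} (K : Matrix (Fin q) (Fin q) ℝ)
    (hK : K.PosDef) (τ : ℝ) (hτ0 : 0 < τ) (hτ1 : τ < 1) :
    0 ≤ ((1 / (τ * (τ - 1))) • matFun K (fun x => x ^ τ) + (1 / (1 - τ)) • K +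
          (1 / τ) • (1 : Matrix (Fin q) (Fin q) ℝ)).trace ∧
    (((1 / (τ * (τ - 1))) • matFun K (fun x => x ^ τ) + (1 / (1 - τ)) • K +
          (1 / τ) • (1 : Matrix (Fin q) (Fin q) ℝ)).trace = 0 ↔ K = 1) := by
  have h : K.IsHermitian := hK.1
  set U : Matrix (Fin q) (Fin q) ℝ := (h.eigenvectorUnitary : Matrix (Fin q) (Fin q) ℝ) with hU
  have hUU : star U * U = 1 := h.eigenvectorUnitary.2.1
  have hUU' : U * star U = 1 := h.eigenvectorUnitary.2.2
  have htraceUDU : ∀ d : Fin q → ℝ, (U * Matrix.diagonal d * star U).trace = ∑ i, d i := by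
    intro d
    rw [Matrix.trace_mul_cycle, hUU, Matrix.one_mul, Matrix.trace_diagonal]
  have hmf : matFun K (fun x => x ^ τ) = U * Matrix.diagonal (fun i => h.eigenvalues i ^ τ) * star U := by
    rw [matFun, dif_pos h]
  have htrK : K.trace = ∑ i, h.eigenvalues i := by
    conv_lhs => rw [h.spectral_theorem]
    simpa using htraceUDU (fun i => h.eigenvalues i)
  have hev : ∀ i, 0 < h.eigenvalues i := hK.eigenvalues_pos
  have htr : ((1 / (τ * (τ - 1))) • matFun K (fun x => x ^ τ) + (1 / (1 - τ)) • K +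
          (1 / τ) • (1 : Matrix (Fin q) (Fin q) ℝ)).trace
      = ∑ i, ((1 / (τ * (τ - 1))) * h.eigenvalues i ^ τ + (1 / (1 - τ)) * h.eigenvalues i
          + 1 / τ) := by
    rw [Matrix.trace_add, Matrix.trace_add, Matrix.trace_smul, Matrix.trace_smul,
      Matrix.trace_smul, hmf, htraceUDU, htrK, Matrix.trace_one]
    rw [Finset.sum_add_distrib, Finset.sum_add_distrib, smul_eq_mul, smul_eq_mul, smul_eq_mul,
      Finset.mul_sum, Finset.mul_sum]
    simp [Finset.card_univ, mul_comm]
  constructor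
  · rw [htr]
    exact Finset.sum_nonneg fun i _ => scalar_nonneg hτ0 hτ1 (hev i)
  · constructor
    · intro h0
      rw [htr] at h0
      have hall := (Finset.sum_eq_zero_iff_of_nonneg
        (fun i _ => scalar_nonneg hτ0 hτ1 (hev i))).mp h0
      have heig1 : ∀ i, h.eigenvalues i = 1 := by
        intro i
        by_contra hne
        exact absurd (hall i (Finset.mem_univ i)).symm
          (ne_of_lt (scalar_pos hτ0 hτ1 (hev i) hne))
      have : K = U * Matrix.diagonal (fun i => h.eigenvalues i) * star U := by
        conv_lhs => rw [h.spectral_theorem]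
        simp [hU]
      rw [this]
      have : (Matrix.diagonal fun i => h.eigenvalues i) = 1 := by
        rw [show (fun i => h.eigenvalues i) = fun _ => (1:ℝ) from funext heig1]
        simp
      rw [this, Matrix.mul_one, hUU']
    · intro hK1
      subst hK1
      have hdiag : Matrix.diagonal (RCLike.ofReal ∘ h.eigenvalues)
          = (1 : Matrix (Fin q) (Fin q) ℝ) := by
        rw [← h.conjStarAlgAut_star_eigenvectorUnitary]
        simp
      have heig1 : ∀ i, h.eigenvalues i = 1 := by
        intro i
        have := congrFun (congrFun hdiag i) i
        simpa [Matrix.one_apply, Matrix.diagonal_apply_eq] using this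
      rw [htr]
      apply Finset.sum_eq_zero
      intro i _
      rw [heig1 i]
      have h2 : τ ≠ 0 := hτ0.ne'
      have h3 : τ - 1 ≠ 0 := by linarith
      have h4 : (1:ℝ) - τ ≠ 0 := by linarith
      have : (1:ℝ) ^ τ = 1 := Real.one_rpow τ
      rw [this]
      field_simp
      ring
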